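/- Let Γ be a group admitting a surjective group homomorphism onto a non-abelian free group, i.e. onto FreeGroup ι for some type ι having at least two distinct elements. Then for every countable group A there exists a subgroup M of Γ such that N_Γ(M)/M is isomorphic to A. -/

import Mathlib

namespace CARP

/-- Letters of the free group on two generators. -/
inductive L | A | A' | B | B'
deriving DecidableEq

namespace L
def inv : L → L
  | A => A' | A' => A | B => B' | B' => B

@[simp] lemma inv_inv : ∀ σ : L, σ.inv.inv = σ := by intro σ; cases σ <;> rfl

lemma inv_injective : Function.Injective inv := by
  intro x y h; cases x <;> cases y <;> simp_all [inv]
end L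

/-- Slots where trees are attached. -/
inductive S0 | base | qin (k j : ℕ) | qout (k j : ℕ)
deriving DecidableEq

/-- Vertices of the graph. -/
inductive V
  | p (k : ℕ)
  | q (k j : ℕ)
  | t (s : S0) (l : List L)
deriving DecidableEq

namespace S0
def dir : S0 → L
  | base => .A' | qin _ _ => .A' | qout _ _ => .A

def coreV : S0 → V
  | base => .p 0 | qin k j => .q k j | qout k j => .q k j
end S0

/-- Reduced words. -/
def Red (l : List L) : Prop := List.IsChain (fun x y => y ≠ x.inv) l

instance : DecidablePred Red := fun l => by unfold Red; infer_instance

/-- last letter of the access word of a tree vertex -/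
def lastW (s : S0) (l : List L) : L := (s.dir :: l).getLastD .A

@[simp] lemma lastW_nil (s : S0) : lastW s [] = s.dir := rfl

@[simp] lemma lastW_concat (s : S0) (l : List L) (x : L) : lastW s (l ++ [x]) = x := by
  simp [lastW, List.getLastD]

/-- The move inside a tree. -/
def tmv (σ : L) (s : S0) (l : List L) : V :=
  if Red (s.dir :: l) then
    if lastW s l = σ.inv then
      match l with
      | [] => s.coreV
      | _ :: _ => .t s l.dropLast
    else .t s (l ++ [σ])
  else .t s l

/-- The action of a letter on the vertex set. -/
def mv : L → V → V
  | .A, .p k => .p (k+1)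
  | .A, .q k j => .t (.qout k j) []
  | .A', .p 0 => .t .base []
  | .A', .p (k+1) => .p k
  | .A', .q k j => .t (.qin k j) []
  | .B, .p 0 => .p 0
  | .B, .p (k+1) => .q (k+1) 1
  | .B, .q k j => if 1 ≤ j ∧ j < k then .q k (j+1) else if 1 ≤ j ∧ j = k then .p k else .q k j
  | .B', .p 0 => .p 0
  | .B', .p (k+1) => .q (k+1) (k+1)
  | .B', .q k j => if 2 ≤ j ∧ j ≤ k then .q k (j-1) else if j = 1 ∧ 1 ≤ k then .p k else .q k j
  | σ, .t s l => tmv σ s l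

lemma red_concat {s : S0} {l : List L} (h : Red (s.dir :: l)) {σ : L}
    (hσ : lastW s l ≠ σ.inv) : Red (s.dir :: (l ++ [σ])) := by
  have : (s.dir :: (l ++ [σ])) = (s.dir :: l) ++ [σ] := by simp
  rw [this]
  rw [Red, List.isChain_append]
  refine ⟨h, List.isChain_singleton _, ?_⟩
  intro x hx y hy
  simp only [List.head?_cons, Option.mem_def, Option.some.injEq] at hy
  subst hy
  intro hc
  apply hσ
  subst hc
  have hne : (s.dir :: l) ≠ [] := by simp
  rw [List.getLast?_eq_getLast hne] at hx
  simp only [Option.mem_def, Option.some.injEq] at hx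
  subst hx
  simp [lastW, List.getLastD_eq_getLast?, List.getLast?_eq_getLast hne]

lemma red_dropLast {s : S0} {l : List L} (h : Red (s.dir :: l)) :
    Red (s.dir :: l.dropLast) := by
  have : (s.dir :: l.dropLast) <+: (s.dir :: l) := by
    rw [List.cons_prefix_cons]
    exact ⟨rfl, List.dropLast_prefix l⟩
  exact h.prefix this


end CARP

namespace CARP

lemma lastW_eq {l : List L} (s : S0) : lastW s l = (s.dir :: l).getLast (by simp) := by
  rw [lastW, List.getLastD_eq_getLast?, List.getLast?_eq_getLast (by simp)]
  rfl

lemma lastW_eq_getLast {l : List L} (h : l ≠ []) (s : S0) : lastW s l = l.getLast h := by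
  rw [lastW_eq s, List.getLast_cons h]

lemma red_last_rel {s : S0} {ld : List L} {x : L} (h : Red (s.dir :: (ld ++ [x]))) :
    x ≠ (lastW s ld).inv := by
  have h2 : Red ((s.dir :: ld) ++ [x]) := by simpa using h
  rw [Red, List.isChain_append] at h2
  obtain ⟨-, -, h3⟩ := h2
  refine h3 (lastW s ld) ?_ x (by simp)
  rw [List.getLast?_eq_getLast (by simp), lastW_eq s]
  rfl

lemma mv_t (σ : L) (s : S0) (l : List L) : mv σ (.t s l) = tmv σ s l := by
  cases σ <;> rfl

lemma tmv_inv (σ : L) (s : S0) (l : List L) : mv σ.inv (tmv σ s l) = .t s l := by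
  unfold tmv
  by_cases hr : Red (s.dir :: l)
  · rw [if_pos hr]
    by_cases hl : lastW s l = σ.inv
    · rw [if_pos hl]
      match l, hl with
      | [], hl =>
        have hs : s.dir = σ.inv := by simpa using hl
        have hσ : σ = s.dir.inv := by rw [hs, L.inv_inv]
        subst hσ
        cases s <;> rfl
      | y :: ys, hl =>
        have hne : (y :: ys) ≠ ([] : List L) := by simp
        have hdecomp : (y :: ys).dropLast ++ [σ.inv] = y :: ys := by
          rw [← hl, lastW_eq_getLast hne]
          exact List.dropLast_append_getLast hne
        rw [mv_t]
        unfold tmv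
        have hrd : Red (s.dir :: (y :: ys).dropLast) := red_dropLast hr
        rw [if_pos hrd]
        have hlast : lastW s (y :: ys).dropLast ≠ σ.inv.inv := by
          intro hc
          have h2 : Red (s.dir :: ((y :: ys).dropLast ++ [σ.inv])) := by rw [hdecomp]; exact hr
          exact red_last_rel h2 (by rw [hc, L.inv_inv])
        rw [if_neg hlast, hdecomp]
    · rw [if_neg hl]
      rw [mv_t]
      unfold tmv
      rw [if_pos (red_concat hr hl)]
      have hc : lastW s (l ++ [σ]) = σ.inv.inv := by rw [lastW_concat, L.inv_inv]
      rw [if_pos hc]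
      cases l with
      | nil => rfl
      | cons y ys =>
        show V.t s ((y :: ys) ++ [σ]).dropLast = _
        rw [List.dropLast_concat]
  · rw [if_neg hr]
    rw [mv_t]
    unfold tmv
    rw [if_neg hr]



lemma mv_inv (σ : L) (v : V) : mv σ.inv (mv σ v) = v := by
  cases v with
  | t s l => rw [mv_t, tmv_inv]
  | p k =>
    cases σ with
    | A => rfl
    | A' =>
      cases k with
      | zero =>
        show mv .A (.t .base []) = _
        have h0 : mv .A (.t .base []) = tmv .A .base [] := rfl
        rw [h0]; unfold tmv
        norm_num [Red, lastW, S0.dir, L.inv, S0.coreV]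
      | succ k => rfl
    | B =>
      cases k with
      | zero => rfl
      | succ k =>
        show mv .B' (.q (k+1) 1) = _
        simp [mv]
    | B' =>
      cases k with
      | zero => rfl
      | succ k =>
        show mv .B (.q (k+1) (k+1)) = _
        simp [mv]
  | q k j =>
    cases σ with
    | A =>
      show mv .A' (.t (.qout k j) []) = _
      have h0 : mv .A' (.t (.qout k j) []) = tmv .A' (.qout k j) [] := rfl
      rw [h0]; unfold tmv
      norm_num [Red, lastW, S0.dir, L.inv, S0.coreV]
    | A' =>
      show mv .A (.t (.qin k j) []) = _
      have h0 : mv .A (.t (.qin k j) []) = tmv .A (.qin k j) [] := rfl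
      rw [h0]; unfold tmv
      norm_num [Red, lastW, S0.dir, L.inv, S0.coreV]
    | B =>
      show mv .B' (mv .B (.q k j)) = _
      simp only [mv]
      split_ifs with h1 h2
      · simp only [mv]
        split_ifs with h3 h4 <;> first | (congr 1 <;> omega) | (exfalso; omega)
      · obtain ⟨h21, rfl⟩ := h2
        obtain ⟨m, rfl⟩ : ∃ m, j = m + 1 := ⟨j - 1, by omega⟩
        rfl
      · simp only [mv]
        split_ifs with h3 h4 <;> first | rfl | (exfalso; omega)
    | B' =>
      show mv .B (mv .B' (.q k j)) = _
      simp only [mv]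
      split_ifs with h1 h2
      · simp only [mv]
        split_ifs with h3 h4 <;> first | (congr 1 <;> omega) | (exfalso; omega)
      · obtain ⟨rfl, h22⟩ := h2
        obtain ⟨m, rfl⟩ : ∃ m, k = m + 1 := ⟨k - 1, by omega⟩
        rfl
      · simp only [mv]
        split_ifs with h3 h4 <;> first | rfl | (exfalso; omega)

lemma mv_inv' (σ : L) (v : V) : mv σ (mv σ.inv v) = v := by
  have h := mv_inv σ.inv v
  rwa [L.inv_inv] at h


def slotValid : S0 → Prop
  | .base => True
  | .qin k j => 1 ≤ j ∧ j ≤ k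
  | .qout k j => 1 ≤ j ∧ j ≤ k

def Valid : V → Prop
  | .p _ => True
  | .q k j => 1 ≤ j ∧ j ≤ k
  | .t s l => slotValid s ∧ Red (s.dir :: l)

lemma valid_coreV {s : S0} (h : slotValid s) : Valid s.coreV := by
  cases s <;> simpa [S0.coreV, Valid, slotValid] using h

lemma valid_tmv {σ : L} {s : S0} {l : List L} (h : Valid (.t s l)) :
    Valid (tmv σ s l) := by
  obtain ⟨hs, hr⟩ := h
  unfold tmv
  rw [if_pos hr]
  by_cases hl : lastW s l = σ.inv
  · rw [if_pos hl]
    match l with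
    | [] => exact valid_coreV hs
    | y :: ys => exact ⟨hs, red_dropLast hr⟩
  · rw [if_neg hl]
    exact ⟨hs, red_concat hr hl⟩

lemma valid_mv (σ : L) {v : V} (h : Valid v) : Valid (mv σ v) := by
  cases v with
  | t s l => rw [mv_t]; exact valid_tmv h
  | p k =>
    cases σ with
    | A => trivial
    | A' => cases k with
      | zero => exact ⟨trivial, by simp [Red]⟩
      | succ k => trivial
    | B => cases k with
      | zero => trivial
      | succ k => exact ⟨by omega, by omega⟩
    | B' => cases k with
      | zero => trivial
      | succ k => exact ⟨by omega, by omega⟩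
  | q k j =>
    obtain ⟨h1, h2⟩ := h
    cases σ with
    | A => exact ⟨⟨h1, h2⟩, by simp [Red]⟩
    | A' => exact ⟨⟨h1, h2⟩, by simp [Red]⟩
    | B =>
      show Valid (if _ then _ else if _ then _ else _)
      split_ifs with ha hb
      · exact ⟨by omega, by omega⟩
      · trivial
      · exact ⟨h1, h2⟩
    | B' =>
      show Valid (if _ then _ else if _ then _ else _)
      split_ifs with ha hb
      · exact ⟨by omega, by omega⟩
      · trivial
      · exact ⟨h1, h2⟩

/-! iterates -/

lemma iterA_p (n k : ℕ) : (mv .A)^[n] (V.p k) = V.p (k + n) := by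
  induction n generalizing k with
  | zero => rfl
  | succ n ih =>
    rw [Function.iterate_succ_apply]
    show (mv .A)^[n] (V.p (k+1)) = _
    rw [ih]
    congr 1
    omega

lemma iterB_q (k : ℕ) : ∀ j, 1 ≤ j → j ≤ k → (mv .B)^[j] (V.p k) = V.q k j := by
  intro j
  induction j with
  | zero => omega
  | succ j ih =>
    intro _ hjk
    rw [Function.iterate_succ_apply']
    by_cases hj : 1 ≤ j
    · rw [ih hj (by omega)]
      show (if _ then _ else if _ then _ else _) = _
      rw [if_pos ⟨hj, by omega⟩]
    · have hj0 : j = 0 := by omega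
      subst hj0
      obtain ⟨m, rfl⟩ : ∃ m, k = m + 1 := ⟨k - 1, by omega⟩
      rfl

/-! trees -/

/-- number of trailing B' letters -/
def tc (s : S0) (l : List L) : ℕ := (((s.dir :: l).reverse).takeWhile (fun x => x = .B')).length

lemma tc_concat_B' (s : S0) (l : List L) : tc s (l ++ [.B']) = tc s l + 1 := by
  unfold tc
  rw [show (s.dir :: (l ++ [L.B'])) = (s.dir :: l) ++ [L.B'] by simp]
  rw [List.reverse_append]
  simp [List.takeWhile]

lemma tc_concat_ne {x : L} (hx : x ≠ .B') (s : S0) (l : List L) : tc s (l ++ [x]) = 0 := by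
  unfold tc
  rw [show (s.dir :: (l ++ [x])) = (s.dir :: l) ++ [x] by simp]
  rw [List.reverse_append]
  simp [List.takeWhile, hx]

lemma tc_last_ne {s : S0} {l : List L} (h : lastW s l ≠ .B') : tc s l = 0 := by
  unfold tc
  cases l using List.reverseRecOn with
  | nil =>
    simp only [lastW_nil] at h
    simp [List.takeWhile, h]
  | append_singleton ys y =>
    rw [lastW_concat] at h
    rw [show (s.dir :: (ys ++ [y])) = (s.dir :: ys) ++ [y] by simp, List.reverse_append]
    simp [List.takeWhile, h]

/-- weight of a tree vertex -/
def fw (s : S0) (l : List L) : ℤ := (l.length : ℤ) - 2 * (tc s l : ℤ)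

lemma dir_ne_B' (s : S0) : s.dir ≠ .B' := by cases s <;> simp [S0.dir]

lemma stepB_tree {s : S0} {l : List L} (hr : Red (s.dir :: l)) :
    ∃ l', mv .B (.t s l) = .t s l' ∧ Red (s.dir :: l') ∧ fw s l' = fw s l + 1 := by
  rw [mv_t]
  unfold tmv
  rw [if_pos hr]
  by_cases hl : lastW s l = L.B.inv
  · have hB' : lastW s l = .B' := hl
    match l, hB' with
    | [], hB' => exact absurd hB' (dir_ne_B' s)
    | y :: ys, hB' =>
      rw [if_pos hl]
      refine ⟨(y :: ys).dropLast, rfl, red_dropLast hr, ?_⟩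
      have hdec : (y :: ys).dropLast ++ [L.B'] = y :: ys := by
        rw [← hB', lastW_eq_getLast (by simp)]
        exact List.dropLast_append_getLast _
      have htc : tc s (y :: ys) = tc s (y :: ys).dropLast + 1 := by
        conv_lhs => rw [← hdec]
        rw [tc_concat_B']
      have hlen : ((y :: ys).length : ℤ) = ((y :: ys).dropLast.length : ℤ) + 1 := by
        conv_lhs => rw [← hdec]
        simp
      unfold fw
      rw [htc, hlen]
      push_cast
      ring
  · rw [if_neg hl]
    refine ⟨l ++ [.B], rfl, red_concat hr hl, ?_⟩
    have h1 : tc s (l ++ [.B]) = 0 := tc_concat_ne (by simp) s l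
    have h2 : tc s l = 0 := tc_last_ne (fun hc => hl (by rw [hc]; rfl))
    unfold fw
    rw [h1, h2]
    simp

lemma iterB_tree {s : S0} {l : List L} (hr : Red (s.dir :: l)) (m : ℕ) :
    ∃ l', (mv .B)^[m] (.t s l) = .t s l' ∧ Red (s.dir :: l') ∧ fw s l' = fw s l + m := by
  induction m generalizing l with
  | zero => exact ⟨l, rfl, hr, by simp⟩
  | succ m ih =>
    obtain ⟨l1, h1, hr1, hf1⟩ := stepB_tree hr
    obtain ⟨l2, h2, hr2, hf2⟩ := ih hr1
    refine ⟨l2, ?_, hr2, ?_⟩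
    · rw [Function.iterate_succ_apply, h1, h2]
    · rw [hf2, hf1]; push_cast; ring

lemma iterB_tree_ne {s : S0} {l : List L} (hr : Red (s.dir :: l)) {m : ℕ} (hm : 1 ≤ m) :
    (mv .B)^[m] (.t s l) ≠ .t s l := by
  obtain ⟨l', h, hr', hf⟩ := iterB_tree hr m
  rw [h]
  intro hc
  injection hc with h1 h2
  subst h2
  omega

/-- some letter different from A' occurs -/
def NA (s : S0) (l : List L) : Prop := ∃ x ∈ (s.dir :: l), x ≠ .A'

lemma stepA_tree {s : S0} {l : List L} (hr : Red (s.dir :: l)) (hna : NA s l) :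
    ∃ l', mv .A (.t s l) = .t s l' ∧ Red (s.dir :: l') ∧ NA s l' := by
  rw [mv_t]
  unfold tmv
  rw [if_pos hr]
  by_cases hl : lastW s l = L.A.inv
  · have hA' : lastW s l = .A' := hl
    match l, hA', hna with
    | [], hA', hna =>
      obtain ⟨x, hx, hxne⟩ := hna
      simp only [List.mem_singleton] at hx
      subst hx
      rw [lastW_nil] at hA'
      exact absurd hA' hxne
    | y :: ys, hA', hna =>
      rw [if_pos hl]
      refine ⟨(y :: ys).dropLast, rfl, red_dropLast hr, ?_⟩
      obtain ⟨x, hx, hxne⟩ := hna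
      have hdec0 : (y :: ys).dropLast ++ [L.A'] = y :: ys := by
        rw [← hA', lastW_eq_getLast (List.cons_ne_nil y ys)]
        exact List.dropLast_append_getLast _
      have hdec : (s.dir :: (y :: ys).dropLast) ++ [L.A'] = s.dir :: (y :: ys) := by
        rw [show (s.dir :: (y::ys).dropLast) ++ [L.A'] = s.dir :: ((y::ys).dropLast ++ [L.A']) from rfl, hdec0]
      rw [← hdec] at hx
      rw [List.mem_append] at hx
      rcases hx with hx | hx
      · exact ⟨x, hx, hxne⟩
      · simp only [List.mem_singleton] at hx
        exact absurd hx hxne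
  · rw [if_neg hl]
    refine ⟨l ++ [.A], rfl, red_concat hr hl, ⟨.A, by simp, by simp⟩⟩

lemma iterA_tree {s : S0} {l : List L} (hr : Red (s.dir :: l)) (hna : NA s l) (n : ℕ) :
    ∃ l', (mv .A)^[n] (.t s l) = .t s l' ∧ Red (s.dir :: l') ∧ NA s l' := by
  induction n generalizing l with
  | zero => exact ⟨l, rfl, hr, hna⟩
  | succ n ih =>
    obtain ⟨l1, h1, hr1, hna1⟩ := stepA_tree hr hna
    obtain ⟨l2, h2, hr2, hna2⟩ := ih hr1 hna1
    exact ⟨l2, by rw [Function.iterate_succ_apply, h1, h2], hr2, hna2⟩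


/-- the key two-element rigidity: fixed by `a⁻¹b²a` and `b a⁻¹b²a b⁻¹` forces basepoint -/
lemma rigidity {v : V} (hv : Valid v) (hne : v ≠ V.p 0)
    (h1 : (mv .B)^[2] (mv .A v) = mv .A v) :
    (mv .B)^[2] (mv .A (mv .B' v)) ≠ mv .A (mv .B' v) := by
  cases v with
  | p k =>
    exfalso
    obtain ⟨m, rfl⟩ : ∃ m, k = m + 1 := ⟨k - 1, by
      rcases Nat.eq_zero_or_pos k with h | h
      · exact absurd (by rw [h]) hne
      · omega⟩
    have : mv .A (V.p (m+1)) = V.p (m+2) := rfl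
    rw [this, iterB_q (m+2) 2 (by omega) (by omega)] at h1
    exact absurd h1 (by simp)
  | q k j =>
    exfalso
    have : mv .A (V.q k j) = V.t (.qout k j) [] := rfl
    rw [this] at h1
    exact iterB_tree_ne (by simp [Red]) (by omega) h1
  | t s l =>
    obtain ⟨hs, hr⟩ := hv
    by_cases hna : NA s l
    · exfalso
      obtain ⟨l', hA, hr', hna'⟩ := stepA_tree hr hna
      rw [hA] at h1
      exact iterB_tree_ne hr' (by omega) h1
    · -- all letters are A'
      have hall : ∀ x ∈ (s.dir :: l), x = L.A' := by
        intro x hx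
        by_contra hc
        exact hna ⟨x, hx, hc⟩
      have hB' : mv .B' (.t s l) = .t s (l ++ [.B']) := by
        rw [mv_t]
        unfold tmv
        rw [if_pos hr]
        have hlw : lastW s l = .A' := by
          apply hall
          rw [lastW_eq]
          exact List.getLast_mem _
        rw [if_neg (by rw [hlw]; simp [L.inv])]
      rw [hB']
      have hr2 : Red (s.dir :: (l ++ [.B'])) := by
        apply red_concat hr
        have hlw : lastW s l = .A' := by
          apply hall
          rw [lastW_eq]
          exact List.getLast_mem _
        rw [hlw]
        simp [L.inv]
      have hna2 : NA s (l ++ [.B']) := ⟨.B', by simp, by simp⟩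
      obtain ⟨l', hA, hr', hna'⟩ := stepA_tree hr2 hna2
      rw [hA]
      exact iterB_tree_ne hr' (by omega)


/-! ## The action of the free group -/

@[simp] lemma mvA'_mvA (v : V) : mv .A' (mv .A v) = v := mv_inv .A v
@[simp] lemma mvB'_mvB (v : V) : mv .B' (mv .B v) = v := mv_inv .B v
@[simp] lemma mvA_mvA' (v : V) : mv .A (mv .A' v) = v := mv_inv' .A v
@[simp] lemma mvB_mvB' (v : V) : mv .B (mv .B' v) = v := mv_inv' .B v

def aE : Equiv.Perm V := ⟨mv .A, mv .A', mv_inv .A, mv_inv' .A⟩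
def bE : Equiv.Perm V := ⟨mv .B, mv .B', mv_inv .B, mv_inv' .B⟩

abbrev G2 := FreeGroup Bool

def ga : G2 := FreeGroup.of false
def gb : G2 := FreeGroup.of true

def ΦV : G2 →* Equiv.Perm V := FreeGroup.lift (fun x => if x then bE else aE)

@[simp] lemma ΦV_ga : ΦV ga = aE := by simp [ΦV, ga]
@[simp] lemma ΦV_gb : ΦV gb = bE := by simp [ΦV, gb]

section Labels

variable {A : Type*} [Group A] (u : ℕ → A)

/-- edge labels -/
def lab : V → A
  | .p 0 => u 0
  | .q k j => if j = k then u k else 1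
  | _ => 1

def aP : Equiv.Perm (A × V) := (Equiv.refl A).prodCongr aE

def bP : Equiv.Perm (A × V) where
  toFun x := (lab u x.2 * x.1, mv .B x.2)
  invFun x := ((lab u (mv .B' x.2))⁻¹ * x.1, mv .B' x.2)
  left_inv x := by
    obtain ⟨y, v⟩ := x
    simp [mul_assoc]
  right_inv x := by
    obtain ⟨y, v⟩ := x
    simp [← mul_assoc]

def ΦP : G2 →* Equiv.Perm (A × V) := FreeGroup.lift (fun x => if x then bP u else aP)

@[simp] lemma ΦP_ga : ΦP u ga = aP (A := A) := by simp [ΦP, ga]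
@[simp] lemma ΦP_gb : ΦP u gb = bP u := by simp [ΦP, gb]

lemma ΦP_equivariant (g : G2) (y : A) (v : V) :
    ΦP u g (y, v) = ((ΦP u g (1, v)).1 * y, ΦV g v) := by
  induction g using FreeGroup.induction_on generalizing y v with
  | C1 => simp
  | of x =>
    have hx : (pure x : G2) = FreeGroup.of x := rfl
    cases x with
    | false =>
      show (ΦP u ga) (y, v) = ((ΦP u ga (1,v)).1 * y, ΦV ga v)
      simp [aP, ΦV_ga, aE]
    | true =>
      show (ΦP u gb) (y, v) = ((ΦP u gb (1,v)).1 * y, ΦV gb v)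
      simp [bP, ΦV_gb, bE]
      rfl
  | inv_of x _ =>
    have hx : (pure x : G2) = FreeGroup.of x := rfl
    cases x with
    | false =>
      show (ΦP u ga⁻¹) (y, v) = ((ΦP u ga⁻¹ (1,v)).1 * y, ΦV ga⁻¹ v)
      rw [map_inv, map_inv, ΦP_ga, ΦV_ga]
      show aP.symm (y, v) = ((aP.symm (1,v)).1 * y, aE.symm v)
      simp [aP]
    | true =>
      show (ΦP u gb⁻¹) (y, v) = ((ΦP u gb⁻¹ (1,v)).1 * y, ΦV gb⁻¹ v)
      rw [map_inv, map_inv, ΦP_gb, ΦV_gb]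
      show (bP u).symm (y, v) = (((bP u).symm (1,v)).1 * y, bE.symm v)
      simp [bP, bE, Equiv.symm, mul_assoc]
  | mul x z ihx ihz =>
    have hz := ihz 1 v
    calc ΦP u (x*z) (y,v) = ΦP u x (ΦP u z (y,v)) := by rw [map_mul]; rfl
    _ = ΦP u x ((ΦP u z (1,v)).1 * y, ΦV z v) := by rw [ihz]
    _ = ((ΦP u x (1, ΦV z v)).1 * ((ΦP u z (1,v)).1 * y), ΦV x (ΦV z v)) := by rw [ihx]
    _ = ((ΦP u (x*z) (1,v)).1 * y, ΦV (x*z) v) := by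
          rw [map_mul, map_mul]
          show _ = ((ΦP u x (ΦP u z (1,v))).1 * y, ΦV x (ΦV z v))
          rw [hz, ihx ((ΦP u z (1,v)).1 * 1) (ΦV z v)]
          simp [mul_assoc]

lemma ΦP_snd (g : G2) (y : A) (v : V) : (ΦP u g (y, v)).2 = ΦV g v := by
  rw [ΦP_equivariant]

end Labels


lemma perm_pow_apply {X : Type*} (π : Equiv.Perm X) (n : ℕ) (x : X) :
    (π ^ n) x = (⇑π)^[n] x := by
  induction n generalizing x with
  | zero => rfl
  | succ n ih =>
    rw [pow_succ, Equiv.Perm.mul_apply, Function.iterate_succ_apply]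
    exact ih (π x)

lemma valid_ΦV (g : G2) {v : V} (hv : Valid v) : Valid (ΦV g v) := by
  induction g using FreeGroup.induction_on generalizing v with
  | C1 => simpa using hv
  | of x =>
    have hx : (pure x : G2) = FreeGroup.of x := rfl
    cases x with
    | false => rw [show FreeGroup.of false = ga from rfl, ΦV_ga]; exact valid_mv .A hv
    | true => rw [show FreeGroup.of true = gb from rfl, ΦV_gb]; exact valid_mv .B hv
  | inv_of x _ =>
    have hx : (pure x : G2) = FreeGroup.of x := rfl
    rw [map_inv]
    cases x with
    | false =>
      rw [show FreeGroup.of false = ga from rfl, ΦV_ga]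
      exact valid_mv .A' hv
    | true =>
      rw [show FreeGroup.of true = gb from rfl, ΦV_gb]
      exact valid_mv .B' hv
  | mul x z ihx ihz =>
    rw [map_mul, Equiv.Perm.mul_apply]
    exact ihx (ihz hv)

/-- the subgroup of loops at the basepoint -/
def KK : Subgroup G2 where
  carrier := {g | ΦV g (V.p 0) = V.p 0}
  one_mem' := by simp
  mul_mem' := by
    intro x y hx hy
    simp only [Set.mem_setOf_eq] at *
    rw [map_mul, Equiv.Perm.mul_apply, hy, hx]
  inv_mem' := by
    intro x hx
    simp only [Set.mem_setOf_eq] at *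
    rw [map_inv]
    conv_lhs => rw [← hx]
    exact Equiv.symm_apply_apply _ _

lemma mem_KK {g : G2} : g ∈ KK ↔ ΦV g (V.p 0) = V.p 0 := Iff.rfl

section Labels2

variable {A : Type*} [Group A] (u : ℕ → A)

/-- the basepoint -/
def s0 : A × V := (1, V.p 0)

/-- the subgroup of label-trivial loops at the basepoint -/
def MM : Subgroup G2 where
  carrier := {g | ΦP u g (s0 (A := A)) = s0}
  one_mem' := by simp
  mul_mem' := by
    intro x y hx hy
    simp only [Set.mem_setOf_eq] at *
    rw [map_mul, Equiv.Perm.mul_apply, hy, hx]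
  inv_mem' := by
    intro x hx
    simp only [Set.mem_setOf_eq] at *
    rw [map_inv]
    conv_lhs => rw [← hx]
    exact Equiv.symm_apply_apply _ _

lemma mem_MM {g : G2} : g ∈ MM u ↔ ΦP u g ((1 : A), V.p 0) = (1, V.p 0) := Iff.rfl

lemma MM_le_KK : MM u ≤ KK := by
  intro g hg
  rw [mem_MM] at hg
  rw [mem_KK, ← ΦP_snd u g 1 (V.p 0), hg]

/-- the generating loops -/
def melt (k : ℕ) : G2 := (ga ^ k)⁻¹ * gb ^ (k+1) * ga ^ k

lemma ΦP_ga_apply (y : A) (v : V) : ΦP u ga (y, v) = (y, mv .A v) := by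
  rw [ΦP_ga]; rfl

lemma ΦP_gb_apply (y : A) (v : V) : ΦP u gb (y, v) = (lab u v * y, mv .B v) := by
  rw [ΦP_gb]; rfl

lemma ΦP_gb_inv_apply (y : A) (v : V) :
    ΦP u gb⁻¹ (y, v) = ((lab u (mv .B' v))⁻¹ * y, mv .B' v) := by
  rw [map_inv, ΦP_gb]; rfl

lemma ΦP_gapow (n k : ℕ) (y : A) : ΦP u (ga^n) (y, V.p k) = (y, V.p (k+n)) := by
  induction n generalizing k with
  | zero => simp
  | succ n ih =>
    rw [pow_succ, map_mul, Equiv.Perm.mul_apply, ΦP_ga_apply]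
    rw [show mv .A (V.p k) = V.p (k+1) from rfl, ih (k+1)]
    congr 2
    omega

lemma ΦP_gbloop : ∀ d j (k : ℕ) (y : A), j + d = k → 1 ≤ j →
    ΦP u (gb^(d+1)) (y, V.q k j) = (u k * y, V.p k) := by
  intro d
  induction d with
  | zero =>
    intro j k y hjk hj
    obtain rfl : j = k := by omega
    rw [pow_one, ΦP_gb_apply]
    have h1 : lab u (V.q j j) = u j := by simp [lab]
    have h2 : mv .B (V.q j j) = V.p j := by
      show (if _ then _ else if _ then _ else _) = _
      rw [if_neg (by omega), if_pos ⟨hj, rfl⟩]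
    rw [h1, h2]
  | succ d ih =>
    intro j k y hjk hj
    rw [pow_succ, map_mul, Equiv.Perm.mul_apply, ΦP_gb_apply]
    have h1 : lab u (V.q k j) = 1 := by
      simp only [lab, ite_eq_right_iff]
      intro h
      omega
    have h2 : mv .B (V.q k j) = V.q k (j+1) := by
      show (if _ then _ else if _ then _ else _) = _
      rw [if_pos ⟨hj, by omega⟩]
    rw [h1, h2, one_mul]
    exact ih (j+1) k y (by omega) (by omega)

lemma ΦP_loop (k : ℕ) (y : A) : ΦP u (gb^(k+1)) (y, V.p k) = (u k * y, V.p k) := by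
  cases k with
  | zero =>
    rw [pow_one, ΦP_gb_apply]
    rfl
  | succ m =>
    rw [show m + 1 + 1 = (m + 1) + 1 from rfl, pow_succ, map_mul, Equiv.Perm.mul_apply,
      ΦP_gb_apply]
    have h1 : lab u (V.p (m+1)) = 1 := rfl
    have h2 : mv .B (V.p (m+1)) = V.q (m+1) 1 := rfl
    rw [h1, h2, one_mul]
    exact ΦP_gbloop u m 1 (m+1) y (by omega) (by omega)

lemma ΦP_melt (k : ℕ) (y : A) : ΦP u (melt k) (y, V.p 0) = (u k * y, V.p 0) := by
  unfold melt
  rw [map_mul, map_mul, Equiv.Perm.mul_apply, Equiv.Perm.mul_apply]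
  rw [show ΦP u (ga^k) (y, V.p 0) = (y, V.p k) from by simpa using ΦP_gapow u k 0 y]
  rw [ΦP_loop]
  rw [map_inv]
  rw [show (ΦP u (ga^k))⁻¹ (u k * y, V.p k) = (ΦP u (ga^k)).symm (u k * y, V.p k) from rfl]
  rw [Equiv.symm_apply_eq]
  simpa using (ΦP_gapow u k 0 (u k * y)).symm

end Labels2


/-! ## Fixed points and the normalizer -/

lemma iterB_loop (k : ℕ) : (mv .B)^[k+1] (V.p k) = V.p k := by
  cases k with
  | zero => rfl
  | succ m =>
    rw [Function.iterate_succ_apply', iterB_q (m+1) (m+1) (by omega) (by omega)]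
    show (if _ then _ else if _ then _ else _) = _
    rw [if_neg (by omega), if_pos ⟨by omega, rfl⟩]

lemma ΦV_gapow (n k : ℕ) : ΦV (ga^n) (V.p k) = V.p (k+n) := by
  rw [map_pow, perm_pow_apply, ΦV_ga]
  show (mv .A)^[n] (V.p k) = _
  exact iterA_p n k

lemma ΦV_gbpow_apply (n : ℕ) (v : V) : ΦV (gb^n) v = (mv .B)^[n] v := by
  rw [map_pow, perm_pow_apply, ΦV_gb]
  rfl

lemma melt_mem_KK (k : ℕ) : melt k ∈ KK := by
  rw [mem_KK]
  unfold melt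
  rw [map_mul, map_mul, Equiv.Perm.mul_apply, Equiv.Perm.mul_apply]
  rw [show ΦV (ga^k) (V.p 0) = V.p k from by simpa using ΦV_gapow k 0]
  rw [ΦV_gbpow_apply, iterB_loop]
  rw [map_inv]
  rw [show (ΦV (ga^k))⁻¹ (V.p k) = (ΦV (ga^k)).symm (V.p k) from rfl]
  rw [Equiv.symm_apply_eq]
  simpa using (ΦV_gapow k 0).symm

lemma ΦV_melt1_iff (v : V) :
    ΦV (melt 1) v = v ↔ (mv .B)^[2] (mv .A v) = mv .A v := by
  unfold melt
  rw [map_mul, map_mul, Equiv.Perm.mul_apply, Equiv.Perm.mul_apply]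
  rw [pow_one, ΦV_gbpow_apply, map_inv]
  rw [show ΦV ga v = mv .A v from by rw [ΦV_ga]; rfl]
  rw [show (ΦV ga)⁻¹ ((mv .B)^[2] (mv .A v)) = (ΦV ga).symm ((mv .B)^[2] (mv .A v)) from rfl]
  rw [Equiv.symm_apply_eq]
  rw [show ΦV ga v = mv .A v from by rw [ΦV_ga]; rfl]

lemma ΦV_conj_gb_iff (w : G2) (v : V) :
    ΦV (gb * w * gb⁻¹) v = v ↔ ΦV w (mv .B' v) = mv .B' v := by
  rw [map_mul, map_mul, map_inv, Equiv.Perm.mul_apply, Equiv.Perm.mul_apply]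
  rw [show (ΦV gb)⁻¹ v = (ΦV gb).symm v from rfl]
  rw [show (ΦV gb).symm v = mv .B' v from by rw [ΦV_gb]; rfl]
  constructor
  · intro h
    have := congrArg (ΦV gb).symm h
    rwa [Equiv.symm_apply_apply, show (ΦV gb).symm v = mv .B' v from by rw [ΦV_gb]; rfl] at this
  · intro h
    rw [h, ΦV_gb]
    exact mv_inv' .B v


section Main

variable {A : Type*} [Group A] (u : ℕ → A)

lemma melt1_mem_MM (hu1 : u 1 = 1) : melt 1 ∈ MM u := by
  rw [mem_MM, ΦP_melt u 1 1, hu1, one_mul]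

lemma w2_mem_MM (hu1 : u 1 = 1) : gb * melt 1 * gb⁻¹ ∈ MM u := by
  rw [mem_MM, map_mul, map_mul, Equiv.Perm.mul_apply, Equiv.Perm.mul_apply]
  rw [ΦP_gb_inv_apply]
  rw [show mv .B' (V.p 0) = V.p 0 from rfl]
  rw [show lab u (V.p 0) = u 0 from rfl]
  rw [ΦP_melt, hu1, one_mul, ΦP_gb_apply]
  rw [show mv .B (V.p 0) = V.p 0 from rfl, show lab u (V.p 0) = u 0 from rfl]
  rw [mul_one, mul_inv_cancel]

lemma normalizer_MM (hu1 : u 1 = 1) : (Subgroup.normalizer (MM u : Set G2)) = KK := by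
  ext g
  constructor
  · intro hg
    have h1 : ∀ m ∈ MM u, ΦP u m (ΦP u g ((1:A), V.p 0)) = ΦP u g (1, V.p 0) := by
      intro m hm
      have hg' : g⁻¹ ∈ (Subgroup.normalizer (MM u : Set G2)) := inv_mem hg
      rw [Subgroup.mem_normalizer_iff] at hg'
      have hmem : g⁻¹ * m * g ∈ MM u := by
        have h2 := (hg' m).mp hm
        simpa using h2
      have hmemeq : ΦP u (g⁻¹ * m * g) ((1:A), V.p 0) = (1, V.p 0) := hmem
      calc ΦP u m (ΦP u g ((1:A), V.p 0)) = ΦP u (m * g) (1, V.p 0) := by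
            rw [map_mul]; rfl
      _ = ΦP u (g * (g⁻¹ * m * g)) (1, V.p 0) := by
            congr 1; group
      _ = ΦP u g (ΦP u (g⁻¹ * m * g) (1, V.p 0)) := by rw [map_mul]; rfl
      _ = ΦP u g (1, V.p 0) := by rw [hmemeq]
    have hval : Valid (ΦP u g ((1:A), V.p 0)).2 := by
      rw [ΦP_snd]; exact valid_ΦV g trivial
    by_cases hv : (ΦP u g ((1:A), V.p 0)).2 = V.p 0
    · rw [mem_KK, ← ΦP_snd u g 1 (V.p 0)]; exact hv
    · exfalso
      have hm1 := h1 (melt 1) (melt1_mem_MM u hu1)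
      have hm2 := h1 (gb * melt 1 * gb⁻¹) (w2_mem_MM u hu1)
      have hs1 : ΦV (melt 1) (ΦP u g ((1:A), V.p 0)).2 = (ΦP u g ((1:A), V.p 0)).2 := by
        conv_lhs => rw [← ΦP_snd u (melt 1) (ΦP u g ((1:A), V.p 0)).1 (ΦP u g ((1:A), V.p 0)).2]
        rw [show ((ΦP u g ((1:A), V.p 0)).1, (ΦP u g ((1:A), V.p 0)).2) = ΦP u g ((1:A), V.p 0)
          from rfl]
        rw [hm1]
      have hs2 : ΦV (gb * melt 1 * gb⁻¹) (ΦP u g ((1:A), V.p 0)).2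
          = (ΦP u g ((1:A), V.p 0)).2 := by
        conv_lhs => rw [← ΦP_snd u (gb * melt 1 * gb⁻¹) (ΦP u g ((1:A), V.p 0)).1
          (ΦP u g ((1:A), V.p 0)).2]
        rw [show ((ΦP u g ((1:A), V.p 0)).1, (ΦP u g ((1:A), V.p 0)).2) = ΦP u g ((1:A), V.p 0)
          from rfl]
        rw [hm2]
      rw [ΦV_melt1_iff] at hs1
      rw [ΦV_conj_gb_iff, ΦV_melt1_iff] at hs2
      exact rigidity hval hv hs1 hs2
  · intro hg
    rw [Subgroup.mem_normalizer_iff]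
    have key : ∀ k, k ∈ KK → ∀ h, h ∈ MM u → k * h * k⁻¹ ∈ MM u := by
      intro k hk h hh
      rw [mem_MM]
      have hsplit : ΦP u (k * h * k⁻¹) ((1:A), V.p 0)
          = ΦP u k (ΦP u h (ΦP u k⁻¹ (1, V.p 0))) := by
        rw [map_mul, map_mul]; rfl
      rw [hsplit]
      have hksnd : ΦV k⁻¹ (V.p 0) = V.p 0 := (inv_mem hk : k⁻¹ ∈ KK)
      have hpair : ΦP u k⁻¹ ((1:A), V.p 0) = ((ΦP u k⁻¹ ((1:A), V.p 0)).1, V.p 0) :=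
        Prod.ext rfl (by rw [ΦP_snd]; exact hksnd)
      rw [hpair]
      have hh' : ΦP u h ((1:A), V.p 0) = (1, V.p 0) := hh
      have hfix : ΦP u h ((ΦP u k⁻¹ ((1:A), V.p 0)).1, V.p 0)
          = ((ΦP u k⁻¹ ((1:A), V.p 0)).1, V.p 0) := by
        rw [ΦP_equivariant]
        rw [show (ΦP u h ((1:A), V.p 0)).1 = 1 from by rw [hh']]
        rw [show ΦV h (V.p 0) = V.p 0 from MM_le_KK u hh]
        rw [one_mul]
      rw [hfix, ← hpair, ← Equiv.Perm.mul_apply, ← map_mul, mul_inv_cancel]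
      simp
    intro h
    constructor
    · intro hh; exact key g hg h hh
    · intro hh
      have h2 := key g⁻¹ (inv_mem hg) (g * h * g⁻¹) hh
      have e : g⁻¹ * (g * h * g⁻¹) * g⁻¹⁻¹ = h := by group
      rwa [e] at h2

/-- the labelling homomorphism on the normalizer -/
def θ (hu1 : u 1 = 1) : ↥((Subgroup.normalizer (MM u : Set G2))) →* A where
  toFun g := (ΦP u g.1 ((1:A), V.p 0)).1
  map_one' := by simp
  map_mul' g h := by
    have hhK : h.1 ∈ KK := le_of_eq (normalizer_MM u hu1) h.2
    show (ΦP u (g.1 * h.1) ((1:A), V.p 0)).1 = _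
    rw [map_mul, Equiv.Perm.mul_apply]
    have hpair : ΦP u h.1 ((1:A), V.p 0) = ((ΦP u h.1 ((1:A), V.p 0)).1, V.p 0) :=
      Prod.ext rfl (by rw [ΦP_snd]; exact hhK)
    rw [hpair, ΦP_equivariant]

lemma θ_surjective (hu1 : u 1 = 1) (husurj : Function.Surjective u) :
    Function.Surjective (θ u hu1) := by
  intro x
  obtain ⟨k, hk⟩ := husurj x
  refine ⟨⟨melt k, ?_⟩, ?_⟩
  · rw [normalizer_MM u hu1]; exact melt_mem_KK k
  · show (ΦP u (melt k) ((1:A), V.p 0)).1 = x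
    rw [ΦP_melt, mul_one, hk]

lemma θ_ker (hu1 : u 1 = 1) :
    (θ u hu1).ker = (MM u).subgroupOf (Subgroup.normalizer (MM u : Set G2)) := by
  ext g
  rw [MonoidHom.mem_ker, Subgroup.mem_subgroupOf]
  constructor
  · intro h
    have hgK : (g : G2) ∈ KK := le_of_eq (normalizer_MM u hu1) g.2
    show ΦP u (g : G2) ((1:A), V.p 0) = (1, V.p 0)
    refine Prod.ext h ?_
    rw [ΦP_snd]
    exact hgK
  · intro h
    show (ΦP u (g : G2) ((1:A), V.p 0)).1 = 1
    rw [(mem_MM u).mp h]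

lemma main_G2 (hu1 : u 1 = 1) (husurj : Function.Surjective u) :
    Nonempty ((((Subgroup.normalizer (MM u : Set G2))) ⧸ (MM u).subgroupOf (Subgroup.normalizer (MM u : Set G2))) ≃* A) :=
  ⟨(QuotientGroup.quotientMulEquivOfEq (θ_ker u hu1).symm).trans
    (QuotientGroup.quotientKerEquivOfSurjective (θ u hu1) (θ_surjective u hu1 husurj))⟩

end Main


/-! ## Pulling back along a surjection -/

lemma normalizer_comap {Γ H : Type*} [Group Γ] [Group H] (f : Γ →* H)
    (hf : Function.Surjective f) (N : Subgroup H) :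
    (Subgroup.normalizer ((N.comap f : Subgroup Γ) : Set Γ)) = (Subgroup.normalizer (N : Set H)).comap f := by
  ext g
  rw [Subgroup.mem_comap, Subgroup.mem_normalizer_iff, Subgroup.mem_normalizer_iff]
  constructor
  · intro hg h
    obtain ⟨x, rfl⟩ := hf h
    constructor
    · intro hx
      have h2 := (hg x).mp hx
      rw [Subgroup.mem_comap] at h2
      simpa [map_mul, map_inv] using h2
    · intro hx
      have h2 : g * x * g⁻¹ ∈ N.comap f := by
        rw [Subgroup.mem_comap]
        simpa [map_mul, map_inv] using hx
      exact (hg x).mpr h2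
  · intro hg h
    rw [Subgroup.mem_comap, Subgroup.mem_comap]
    have h2 := hg (f h)
    rw [show f g * f h * (f g)⁻¹ = f (g * h * g⁻¹) from by simp [map_mul, map_inv]] at h2
    exact h2

lemma pullback {Γ H A : Type*} [Group Γ] [Group H] [Group A] (f : Γ →* H)
    (hf : Function.Surjective f) (N : Subgroup H) (θ : ↥(Subgroup.normalizer (N : Set H)) →* A)
    (hs : Function.Surjective θ) (hk : θ.ker = N.subgroupOf (Subgroup.normalizer (N : Set H))) :
    Nonempty (((Subgroup.normalizer ((N.comap f : Subgroup Γ) : Set Γ)) ⧸ (N.comap f).subgroupOf (Subgroup.normalizer ((N.comap f : Subgroup Γ) : Set Γ))) ≃* A) := by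
  have hnorm := normalizer_comap f hf N
  have hmem : ∀ x : ↥(Subgroup.normalizer ((N.comap f : Subgroup Γ) : Set Γ)), f x.1 ∈ (Subgroup.normalizer (N : Set H)) := by
    intro x
    have h2 : (x : Γ) ∈ Subgroup.comap f (Subgroup.normalizer (N : Set H)) := le_of_eq hnorm x.2
    exact Subgroup.mem_comap.mp h2
  let ψ : ↥(Subgroup.normalizer ((N.comap f : Subgroup Γ) : Set Γ)) →* ↥(Subgroup.normalizer (N : Set H)) :=
    (f.comp (Subgroup.subtype _)).codRestrict _ hmem
  let θ' : ↥(Subgroup.normalizer ((N.comap f : Subgroup Γ) : Set Γ)) →* A := θ.comp ψ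
  have hs' : Function.Surjective θ' := by
    intro x
    obtain ⟨n, hn⟩ := hs x
    obtain ⟨y, hy⟩ := hf n.1
    have hy2 : y ∈ (Subgroup.normalizer ((N.comap f : Subgroup Γ) : Set Γ)) := by
      rw [hnorm]
      rw [Subgroup.mem_comap, hy]
      exact n.2
    refine ⟨⟨y, hy2⟩, ?_⟩
    show θ (ψ ⟨y, hy2⟩) = x
    have : ψ ⟨y, hy2⟩ = n := by
      apply Subtype.ext
      show f y = n.1
      exact hy
    rw [this, hn]
  have hk' : θ'.ker = (N.comap f).subgroupOf (Subgroup.normalizer ((N.comap f : Subgroup Γ) : Set Γ)) := by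
    ext g
    rw [MonoidHom.mem_ker, Subgroup.mem_subgroupOf, Subgroup.mem_comap]
    show θ (ψ g) = 1 ↔ _
    rw [← MonoidHom.mem_ker, hk, Subgroup.mem_subgroupOf]
    exact Iff.rfl
  exact ⟨(QuotientGroup.quotientMulEquivOfEq hk'.symm).trans
    (QuotientGroup.quotientKerEquivOfSurjective θ' hs')⟩

end CARP

/-- A group with an epimorphism onto a non-abelian free group has the
countable automorphism realisation property. -/
theorem carp_of_free_quotient
    {Γ : Type*} [Group Γ] {ι : Type*} (a b : ι) (hab : a ≠ b)
    (φ : Γ →* FreeGroup ι) (hφ : Function.Surjective φ) :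
    ∀ (A : Type*) [Group A] [Countable A], ∃ M : Subgroup Γ,
      Nonempty ((Subgroup.normalizer (M : Set Γ) ⧸ M.subgroupOf (Subgroup.normalizer (M : Set Γ))) ≃* A) := by
  intro A _ _
  classical
  -- a surjection ℕ → A sending 1 to 1
  obtain ⟨e, he⟩ := exists_surjective_nat A
  set u : ℕ → A := fun n => if n = 1 then 1 else e (n - 2) with hu
  have hu1 : u 1 = 1 := by simp [hu]
  have husurj : Function.Surjective u := by
    intro x
    obtain ⟨m, hm⟩ := he x
    refine ⟨m + 2, ?_⟩
    have h1 : ¬(m + 2 = 1) := by omega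
    simp only [hu, if_neg h1]
    simpa using hm
  -- the retraction onto the free group on two generators
  let r : FreeGroup ι →* FreeGroup Bool :=
    FreeGroup.lift (fun i => if i = a then CARP.ga else if i = b then CARP.gb else 1)
  have hra : r (FreeGroup.of a) = CARP.ga := by simp [r]
  have hrb : r (FreeGroup.of b) = CARP.gb := by simp [r, hab.symm]
  have hr : Function.Surjective r := by
    intro x
    induction x using FreeGroup.induction_on with
    | C1 => exact ⟨1, map_one r⟩
    | of c =>
      cases c with
      | false => exact ⟨FreeGroup.of a, hra⟩
      | true => exact ⟨FreeGroup.of b, hrb⟩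
    | inv_of c ih =>
      obtain ⟨y, hy⟩ := ih
      exact ⟨y⁻¹, by rw [map_inv, hy]⟩
    | mul c d ihc ihd =>
      obtain ⟨y, hy⟩ := ihc
      obtain ⟨z, hz⟩ := ihd
      exact ⟨y * z, by rw [map_mul, hy, hz]⟩
  let f : Γ →* FreeGroup Bool := r.comp φ
  have hf : Function.Surjective f := by
    intro x
    obtain ⟨y, hy⟩ := hr x
    obtain ⟨z, hz⟩ := hφ y
    exact ⟨z, by simp [f, hz, hy]⟩
  exact ⟨(CARP.MM u).comap f,
    CARP.pullback f hf (CARP.MM u) (CARP.θ u hu1) (CARP.θ_surjective u hu1 husurj) (CARP.θ_ker u hu1)⟩
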